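/- With i.i.d. centered noise ε_0, …, ε_n in ℝ² with E[ε_j^(1) ε_j^(2)] = η₁₂, and weights α_1, …, α_M satisfying ∑_{i=1}^{M} α_i = 1 and ∑_{i=1}^{M} α_i/i = 0 (with M ≤ n/2), the multi-scale noise term ∑_{i=1}^{M} (α_i/i) ∑_{j=i}^{n} (ε_j^(1) - ε_{j-i}^(1))(ε_j^(2) - ε_{j-i}^(2)) has expectation -2 η₁₂. -/

import Mathlib

open MeasureTheory ProbabilityTheory

/-- Expectation of the multi-scale noise term: with weights summing to one and weighted
reciprocal sums vanishing, the multi-scale noise term has expectation `-2 η₁₂`. -/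
theorem stmt_8 {Ω : Type*} [MeasureSpace Ω] [IsProbabilityMeasure (ℙ : Measure Ω)]
    (ε1 ε2 : ℕ → Ω → ℝ) (η12 : ℝ) (n M : ℕ) (hM : 1 ≤ M) (hMn : 2 * M ≤ n)
    (α : ℕ → ℝ) (hα1 : ∑ i ∈ Finset.Icc 1 M, α i = 1)
    (hα2 : ∑ i ∈ Finset.Icc 1 M, α i / (i : ℝ) = 0)
    (hint : ∀ j k, Integrable (fun ω => ε1 j ω * ε2 k ω))
    (hmean1 : ∀ j, ∫ ω, ε1 j ω = 0) (hmean2 : ∀ j, ∫ ω, ε2 j ω = 0)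
    (hsame : ∀ j, ∫ ω, ε1 j ω * ε2 j ω = η12)
    (hdiff : ∀ j k, j ≠ k → ∫ ω, ε1 j ω * ε2 k ω = 0) :
    ∫ ω, ∑ i ∈ Finset.Icc 1 M, (α i / (i : ℝ)) *
        ∑ j ∈ Finset.Icc i n, (ε1 j ω - ε1 (j - i) ω) * (ε2 j ω - ε2 (j - i) ω) =
      -2 * η12 := by
  have hexp : ∀ i j : ℕ, (fun ω => (ε1 j ω - ε1 (j - i) ω) * (ε2 j ω - ε2 (j - i) ω))
      = fun ω => ε1 j ω * ε2 j ω - ε1 j ω * ε2 (j - i) ω - ε1 (j - i) ω * ε2 j ω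
        + ε1 (j - i) ω * ε2 (j - i) ω := by
    intro i j; funext ω; ring
  have hig : ∀ i j : ℕ,
      Integrable (fun ω => (ε1 j ω - ε1 (j - i) ω) * (ε2 j ω - ε2 (j - i) ω)) := by
    intro i j
    rw [hexp]
    exact (((hint _ _).sub (hint _ _)).sub (hint _ _)).add (hint _ _)
  have key : ∀ i ∈ Finset.Icc 1 M, ∀ j ∈ Finset.Icc i n,
      ∫ ω, (ε1 j ω - ε1 (j - i) ω) * (ε2 j ω - ε2 (j - i) ω) = 2 * η12 := by
    intro i hi j hj
    simp only [Finset.mem_Icc] at hi hj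
    have hne : j - i ≠ j := by omega
    have ha : Integrable (fun ω => ε1 j ω * ε2 j ω - ε1 j ω * ε2 (j - i) ω) ℙ :=
      (hint _ _).sub (hint _ _)
    have hb : Integrable (fun ω => ε1 j ω * ε2 j ω - ε1 j ω * ε2 (j - i) ω
        - ε1 (j - i) ω * ε2 j ω) ℙ := ha.sub (hint _ _)
    rw [hexp, integral_add hb (hint _ _), integral_sub ha (hint _ _),
      integral_sub (hint _ _) (hint _ _),
      hsame, hsame, hdiff _ _ hne.symm, hdiff _ _ hne]
    ring
  rw [integral_finset_sum _ (fun i _ =>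
    Integrable.const_mul (integrable_finset_sum _ (fun j _ => hig i j)) _)]
  have step : ∀ i ∈ Finset.Icc 1 M,
      (∫ ω, (α i / (i : ℝ)) *
        ∑ j ∈ Finset.Icc i n, (ε1 j ω - ε1 (j - i) ω) * (ε2 j ω - ε2 (j - i) ω))
      = 2 * η12 * ((n : ℝ) + 1) * (α i / i) - 2 * η12 * α i := by
    intro i hi
    have hi' := hi
    simp only [Finset.mem_Icc] at hi'
    rw [integral_const_mul, integral_finset_sum _ (fun j _ => hig i j),
      Finset.sum_congr rfl (key i hi), Finset.sum_const, Nat.card_Icc]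
    have hin : i ≤ n + 1 := by omega
    have hi0 : (i : ℝ) ≠ 0 := Nat.cast_ne_zero.mpr (by omega)
    have hin2 : i ≤ 1 + n := by omega
    push_cast [hin]
    field_simp
    rw [nsmul_eq_mul, Nat.cast_sub hin]
    push_cast
    ring
  rw [Finset.sum_congr rfl step, Finset.sum_sub_distrib, ← Finset.mul_sum, ← Finset.mul_sum,
    hα1, hα2]
  ring
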